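/- Decomposition for conjunctions of reachability and safety tasks (correctness core of Algorithm 3): let T₁ be a set of nonempty finite words over A × B, let M₂ be a DFA over A × B with finite state type and accepting set F₂, and let T₂ be the set of nonempty finite words accepted by M₂. For a state q of M₂, define AgentWinsSafeFrom(q) to hold iff there exists an agent strategy σag such that for every environment strategy σenv and every k ≥ 1, M₂.evalFrom q (play(σag, σenv)_{<k}) ∈ F₂. Then the following are equivalent: (i) there exists an agent strategy enforcing Reach T₁ ∩ Safe T₂; (ii) there exists an agent strategy σag such that for every σenv there is k ≥ 1 with play(σag, σenv)_{<k} ∈ T₁, play(σag, σenv)_{<j} ∈ T₂ for all 1 ≤ j ≤ k, and AgentWinsSafeFrom(M₂.eval(play(σag, σenv)_{<k})). -/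
import Mathlib


/-- The first `k` letters of an infinite trace. -/
def pre {α : Type} (π : ℕ → α) (k : ℕ) : List α := (List.range k).map π

/-- The finite history of pairs of moves after `k` rounds. -/
def playPrefix {A B : Type} (σag : List B → A) (σenv : List A → B) : ℕ → List (A × B)
  | 0 => []
  | k + 1 =>
      let h := playPrefix σag σenv k
      let a := σag (h.map Prod.snd)
      let b := σenv (h.map Prod.fst ++ [a])
      h ++ [(a, b)]

/-- The infinite play generated by an agent strategy `σag : List B → A`
(the agent moves first) and an environment strategy `σenv : List A → B`:
`a₀ = σag []`, `b₀ = σenv [a₀]`, `a_{i+1} = σag [b₀, …, b_i]`,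
`b_{i+1} = σenv [a₀, …, a_{i+1}]`, and `play σag σenv i = (a_i, b_i)`. -/
def play {A B : Type} (σag : List B → A) (σenv : List A → B) (i : ℕ) : A × B :=
  let h := playPrefix σag σenv i
  let a := σag (h.map Prod.snd)
  let b := σenv (h.map Prod.fst ++ [a])
  (a, b)

/-- Reachability property: some nonempty finite prefix is in `T`. -/
def Reach {A B : Type} (T : Set (List (A × B))) : Set (ℕ → A × B) :=
  {π | ∃ k, 1 ≤ k ∧ pre π k ∈ T}

/-- Safety property: every nonempty finite prefix is in `T`. -/
def Safe {A B : Type} (T : Set (List (A × B))) : Set (ℕ → A × B) :=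
  {π | ∀ k, 1 ≤ k → pre π k ∈ T}

/-- The agent strategy `σag` enforces the property `P`. -/
def AgentEnforces {A B : Type} (σag : List B → A) (P : Set (ℕ → A × B)) : Prop :=
  ∀ σenv : List A → B, play σag σenv ∈ P

/-- The environment strategy `σenv` enforces the property `P`. -/
def EnvEnforces {A B : Type} (σenv : List A → B) (P : Set (ℕ → A × B)) : Prop :=
  ∀ σag : List B → A, play σag σenv ∈ P

/-- The agent strategy `σag` enforces `Task` under the environment
specification `Env`. -/
def EnforcesUnder {A B : Type} (σag : List B → A) (Task Env : Set (ℕ → A × B)) : Prop :=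
  ∀ σenv : List A → B, EnvEnforces σenv Env → play σag σenv ∈ Task

/-- `AgentWinsSafeFrom M q` : the agent has a strategy ensuring that, starting
the run of `M` from state `q`, every state reached after `k ≥ 1` letters of the
play lies in `M.accept`. -/
def AgentWinsSafeFrom {A B Q : Type} (M : DFA (A × B) Q) (q : Q) : Prop :=
  ∃ σag : List B → A, ∀ σenv : List A → B, ∀ k, 1 ≤ k →
    M.evalFrom q (pre (play σag σenv) k) ∈ M.accept

section Aux
variable {A B : Type}

lemma playPrefix_length (σag : List B → A) (σenv : List A → B) (n : ℕ) :
    (playPrefix σag σenv n).length = n := by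
  induction n with
  | zero => rfl
  | succ n ih => simp [playPrefix, ih]

lemma playPrefix_succ (σag : List B → A) (σenv : List A → B) (n : ℕ) :
    playPrefix σag σenv (n+1) =
      playPrefix σag σenv n ++
        [(σag ((playPrefix σag σenv n).map Prod.snd),
          σenv ((playPrefix σag σenv n).map Prod.fst ++
            [σag ((playPrefix σag σenv n).map Prod.snd)]))] := rfl

lemma pre_play (σag : List B → A) (σenv : List A → B) (n : ℕ) :
    pre (play σag σenv) n = playPrefix σag σenv n := by
  induction n with
  | zero => rfl
  | succ n ih =>
    show (List.range (n+1)).map (play σag σenv) = _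
    rw [List.range_succ, List.map_append]
    show pre (play σag σenv) n ++ [play σag σenv n] = _
    rw [ih, playPrefix_succ]
    rfl

lemma playPrefix_take (σag : List B → A) (σenv : List A → B) {j n : ℕ} (h : j ≤ n) :
    (playPrefix σag σenv n).take j = playPrefix σag σenv j := by
  induction n with
  | zero =>
    have : j = 0 := by omega
    subst this; rfl
  | succ n ih =>
    rcases Nat.lt_or_ge j (n+1) with hj | hj
    · rw [playPrefix_succ, List.take_append_of_le_length
        (by rw [playPrefix_length]; omega), ih (by omega)]
    · have : j = n + 1 := by omega
      subst this
      rw [List.take_of_length_le (by rw [playPrefix_length])]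

lemma playPrefix_congr (σag σag₁ : List B → A) (σenv σenv₁ : List A → B) (n : ℕ)
    (h1 : ∀ m < n, σag₁ ((playPrefix σag σenv m).map Prod.snd)
      = σag ((playPrefix σag σenv m).map Prod.snd))
    (h2 : ∀ m < n, ∀ a, σenv₁ ((playPrefix σag σenv m).map Prod.fst ++ [a])
      = σenv ((playPrefix σag σenv m).map Prod.fst ++ [a])) :
    playPrefix σag₁ σenv₁ n = playPrefix σag σenv n := by
  induction n with
  | zero => rfl
  | succ n ih =>
    have hn : playPrefix σag₁ σenv₁ n = playPrefix σag σenv n :=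
      ih (fun m hm => h1 m (by omega)) (fun m hm => h2 m (by omega))
    rw [playPrefix_succ, playPrefix_succ, hn, h1 n (by omega), h2 n (by omega)]

lemma playPrefix_shift (σag₁ σag' : List B → A) (σenv₁ σenv' : List A → B)
    (w : List (A × B))
    (h0 : playPrefix σag₁ σenv₁ w.length = w)
    (hA : ∀ hb : List B, σag₁ (w.map Prod.snd ++ hb) = σag' hb)
    (hB : ∀ ha : List A, ha ≠ [] → σenv₁ (w.map Prod.fst ++ ha) = σenv' ha) :
    ∀ m, playPrefix σag₁ σenv₁ (w.length + m) = w ++ playPrefix σag' σenv' m := by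
  intro m; induction m with
  | zero => simpa [playPrefix] using h0
  | succ m ih =>
    show playPrefix σag₁ σenv₁ ((w.length + m) + 1) = _
    rw [playPrefix_succ, ih, playPrefix_succ, List.map_append, List.map_append, hA,
      List.append_assoc (w.map Prod.fst), hB _ (by simp), List.append_assoc]

end Aux

section Aux2
variable {A B Q : Type}

/-- Auxiliary: reconstruct history from reversed environment moves. -/
def histDecRev (σ : List B → A) : List B → List (A × B)
  | [] => []
  | b :: bs => histDecRev σ bs ++ [(σ bs.reverse, b)]

/-- Reconstruct the full `A × B` history from the agent strategy and the
observed environment moves. -/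
def histDec (σ : List B → A) (l : List B) : List (A × B) := histDecRev σ l.reverse

lemma histDec_concat (σ : List B → A) (l : List B) (b : B) :
    histDec σ (l ++ [b]) = histDec σ l ++ [(σ l, b)] := by
  simp [histDec, histDecRev, List.reverse_append]

lemma histDec_playPrefix (σag : List B → A) (σenv : List A → B) (n : ℕ) :
    histDec σag ((playPrefix σag σenv n).map Prod.snd) = playPrefix σag σenv n := by
  induction n with
  | zero => rfl
  | succ n ih =>
    rw [playPrefix_succ, List.map_append]
    simp only [List.map_cons, List.map_nil]
    rw [histDec_concat, ih]

open Classical in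
/-- A chosen winning safety strategy from state `q` (junk if none exists). -/
noncomputable def safeStrat [Nonempty A] (M : DFA (A × B) Q) (q : Q) : List B → A :=
  if h : AgentWinsSafeFrom M q then h.choose else fun _ => Classical.arbitrary A

lemma safeStrat_spec [Nonempty A] (M : DFA (A × B) Q) (q : Q)
    (h : AgentWinsSafeFrom M q) :
    ∀ σenv : List A → B, ∀ k, 1 ≤ k →
      M.evalFrom q (pre (play (safeStrat M q) σenv) k) ∈ M.accept := by
  rw [safeStrat, dif_pos h]
  exact h.choose_spec

open Classical in
/-- The switching strategy: follow `σag` until the reconstructed history has a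
prefix in `T₁` from which the safety game is winnable, then switch to the
chosen safety strategy. -/
noncomputable def switchStrat [Nonempty A] (T₁ : Set (List (A × B))) (M : DFA (A × B) Q)
    (σag : List B → A) (hb : List B) : A :=
  if h : ∃ j, 1 ≤ j ∧ j ≤ hb.length ∧ histDec σag (hb.take j) ∈ T₁ ∧
      AgentWinsSafeFrom M (M.eval (histDec σag (hb.take j)))
  then safeStrat M (M.eval (histDec σag (hb.take (Nat.find h)))) (hb.drop (Nat.find h))
  else σag hb

end Aux2

/-- Decomposition for conjunctions of reachability and safety tasks
(correctness core of Algorithm 3): the agent can enforce `Reach T₁ ∩ Safe T₂`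
iff it can enforce reaching `T₁` while staying in `T₂`, arriving at a state of
`M₂` from which it can win the safety game for `T₂`. -/

theorem reach_and_safe_decomposition {A B Q₂ : Type}
    [Fintype A] [Fintype B] [Nonempty A] [Nonempty B] [Fintype Q₂]
    (T₁ : Set (List (A × B))) (M₂ : DFA (A × B) Q₂)
    (T₂ : Set (List (A × B))) (hT₂ : T₂ = {w | w ≠ [] ∧ w ∈ M₂.accepts}) :
    (∃ σag : List B → A, AgentEnforces σag (Reach T₁ ∩ Safe T₂)) ↔
      (∃ σag : List B → A, ∀ σenv : List A → B, ∃ k, 1 ≤ k ∧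
        pre (play σag σenv) k ∈ T₁ ∧
        (∀ j, 1 ≤ j → j ≤ k → pre (play σag σenv) j ∈ T₂) ∧
        AgentWinsSafeFrom M₂ (M₂.eval (pre (play σag σenv) k))) := by
  constructor
  · rintro ⟨σag, hσ⟩
    refine ⟨σag, fun σenv => ?_⟩
    obtain ⟨hreach, hsafe⟩ := hσ σenv
    obtain ⟨k, hk1, hkT₁⟩ := hreach
    refine ⟨k, hk1, hkT₁, fun j hj1 _ => hsafe j hj1, ?_⟩
    set w := pre (play σag σenv) k with hw
    have hwp : w = playPrefix σag σenv k := pre_play σag σenv k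
    have hwlen : w.length = k := by rw [hwp, playPrefix_length]
    refine ⟨fun hb => σag (w.map Prod.snd ++ hb), fun σenv' m hm => ?_⟩
    set σenv₁ : List A → B :=
      (fun ha => if k < ha.length then σenv' (ha.drop k) else σenv ha) with hσenv₁
    have hpre : playPrefix σag σenv₁ k = playPrefix σag σenv k := by
      apply playPrefix_congr
      · intro m _; rfl
      · intro m hmk a
        show (if k < (List.map Prod.fst (playPrefix σag σenv m) ++ [a]).length
            then _ else _) = _
        rw [if_neg]
        simp only [List.length_append, List.length_map, List.length_cons,
          List.length_nil, playPrefix_length]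
        omega
    have hshift := playPrefix_shift σag (fun hb => σag (w.map Prod.snd ++ hb)) σenv₁ σenv' w
      (by rw [hwlen, hpre, ← hwp]) (fun hb => rfl)
      (by
        intro ha hane
        show (if k < (w.map Prod.fst ++ ha).length
            then σenv' ((w.map Prod.fst ++ ha).drop k) else _) = σenv' ha
        have hlf : (w.map Prod.fst).length = k := by simp [hwlen]
        rw [if_pos (by rw [List.length_append, hlf]
                       have := List.length_pos_iff.mpr hane; omega)]
        rw [← hlf, List.drop_left]) m
    have hsafe₁ := (hσ σenv₁).2 (k + m) (by omega)
    rw [pre_play] at hsafe₁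
    rw [hwlen] at hshift
    rw [hshift, hT₂] at hsafe₁
    obtain ⟨-, hacc⟩ := hsafe₁
    rw [DFA.mem_accepts] at hacc
    have heq : M₂.eval (w ++ playPrefix (fun hb => σag (w.map Prod.snd ++ hb)) σenv' m)
        = M₂.evalFrom (M₂.eval w)
            (playPrefix (fun hb => σag (w.map Prod.snd ++ hb)) σenv' m) :=
      M₂.evalFrom_of_append M₂.start _ _
    rw [heq] at hacc
    rw [pre_play]
    exact hacc
  · rintro ⟨σag, H⟩
    classical
    refine ⟨switchStrat T₁ M₂ σag, fun σenv => ?_⟩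
    obtain ⟨k, hk1, hkT₁, hkT₂, hkwin⟩ := H σenv
    have hex : ∃ n, 1 ≤ n ∧ pre (play σag σenv) n ∈ T₁ ∧
        AgentWinsSafeFrom M₂ (M₂.eval (pre (play σag σenv) n)) := ⟨k, hk1, hkT₁, hkwin⟩
    obtain ⟨hτ1, hτT₁, hτwin⟩ := Nat.find_spec hex
    set τ := Nat.find hex with hτdef
    have hτk : τ ≤ k := Nat.find_min' hex ⟨hk1, hkT₁, hkwin⟩
    have hmin : ∀ j, j < τ → ¬(1 ≤ j ∧ pre (play σag σenv) j ∈ T₁ ∧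
        AgentWinsSafeFrom M₂ (M₂.eval (pre (play σag σenv) j))) :=
      fun j hj => Nat.find_min hex hj
    set w := playPrefix σag σenv τ with hwdef
    have hwpre : pre (play σag σenv) τ = w := pre_play σag σenv τ
    have hwlen : w.length = τ := playPrefix_length σag σenv τ
    rw [hwpre] at hτT₁ hτwin
    have hpreeq : ∀ n, n ≤ τ →
        playPrefix (switchStrat T₁ M₂ σag) σenv n = playPrefix σag σenv n := by
      intro n hn
      apply playPrefix_congr
      · intro m hm
        rw [switchStrat, dif_neg]
        rintro ⟨j, hj1, hjle, hjT₁, hjwin⟩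
        have hlen : (List.map Prod.snd (playPrefix σag σenv m)).length = m := by
          simp [playPrefix_length]
        rw [hlen] at hjle
        have htk : (List.map Prod.snd (playPrefix σag σenv m)).take j
            = (playPrefix σag σenv j).map Prod.snd := by
          rw [← List.map_take, playPrefix_take σag σenv hjle]
        rw [htk, histDec_playPrefix, ← pre_play] at hjT₁ hjwin
        exact hmin j (by omega) ⟨hj1, hjT₁, hjwin⟩
      · intro m hm a; rfl
    have hC1 : playPrefix (switchStrat T₁ M₂ σag) σenv τ = w := by
      rw [hpreeq τ le_rfl, hwdef]
    have hlenw : (w.map Prod.snd).length = τ := by simp [hwlen]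
    have hdecw : histDec σag (w.map Prod.snd) = w := by
      rw [hwdef]; exact histDec_playPrefix σag σenv τ
    have hC2 : ∀ hb : List B,
        switchStrat T₁ M₂ σag (w.map Prod.snd ++ hb) = safeStrat M₂ (M₂.eval w) hb := by
      intro hb
      have htake : (w.map Prod.snd ++ hb).take τ = w.map Prod.snd := by
        rw [← hlenw, List.take_left]
      have hdrop : (w.map Prod.snd ++ hb).drop τ = hb := by
        rw [← hlenw, List.drop_left]
      have hfact : 1 ≤ τ ∧ τ ≤ (w.map Prod.snd ++ hb).length ∧
          histDec σag ((w.map Prod.snd ++ hb).take τ) ∈ T₁ ∧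
          AgentWinsSafeFrom M₂ (M₂.eval (histDec σag ((w.map Prod.snd ++ hb).take τ))) := by
        rw [htake, hdecw]
        exact ⟨hτ1, by rw [List.length_append, hlenw]; omega, hτT₁, hτwin⟩
      have hex2 : ∃ j, 1 ≤ j ∧ j ≤ (w.map Prod.snd ++ hb).length ∧
          histDec σag ((w.map Prod.snd ++ hb).take j) ∈ T₁ ∧
          AgentWinsSafeFrom M₂ (M₂.eval (histDec σag ((w.map Prod.snd ++ hb).take j))) :=
        ⟨τ, hfact⟩
      rw [switchStrat, dif_pos hex2]
      have hfind : Nat.find hex2 = τ := by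
        rw [Nat.find_eq_iff]
        refine ⟨hfact, ?_⟩
        rintro j hjτ ⟨hj1, hjle, hjT₁, hjwin⟩
        have htk : (w.map Prod.snd ++ hb).take j = (playPrefix σag σenv j).map Prod.snd := by
          rw [List.take_append_of_le_length (by rw [hlenw]; omega), ← List.map_take,
            hwdef, playPrefix_take σag σenv (le_of_lt hjτ)]
        rw [htk, histDec_playPrefix, ← pre_play] at hjT₁ hjwin
        exact hmin j hjτ ⟨hj1, hjT₁, hjwin⟩
      rw [hfind, htake, hdrop, hdecw]
    set σenv' : List A → B := (fun ha => σenv (w.map Prod.fst ++ ha)) with hσenv'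
    have hshift := playPrefix_shift (switchStrat T₁ M₂ σag) (safeStrat M₂ (M₂.eval w))
      σenv σenv' w (by rw [hwlen]; exact hC1) hC2 (fun ha _ => rfl)
    refine ⟨⟨τ, hτ1, ?_⟩, ?_⟩
    · rw [pre_play, hC1]; exact hτT₁
    · intro n hn1
      rw [pre_play]
      rcases le_or_gt n τ with hnτ | hnτ
      · rw [hpreeq n hnτ, ← pre_play]
        exact hkT₂ n hn1 (le_trans hnτ hτk)
      · have hm1 : 1 ≤ n - τ := by omega
        have hneq : n = τ + (n - τ) := by omega
        have hs := hshift (n - τ)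
        rw [hwlen] at hs
        rw [hneq, hs, hT₂]
        have hwne : w ≠ [] := by
          rw [← List.length_pos_iff, hwlen]; omega
        refine ⟨fun hcon => hwne (List.append_eq_nil_iff.mp hcon).1, ?_⟩
        rw [DFA.mem_accepts]
        have hsp := safeStrat_spec M₂ (M₂.eval w) hτwin σenv' (n - τ) hm1
        rw [pre_play] at hsp
        have heq : M₂.eval (w ++ playPrefix (safeStrat M₂ (M₂.eval w)) σenv' (n - τ))
            = M₂.evalFrom (M₂.eval w) (playPrefix (safeStrat M₂ (M₂.eval w)) σenv' (n - τ)) :=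
          M₂.evalFrom_of_append M₂.start _ _
        rw [heq]
        exact hsp
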